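/- For a quasi-choice correspondence c over a finite set X and any rational share s ∈ [0,1), the following are equivalent: (i) c satisfies Axiom α; (ii) c is s-majoritarian for some rational s ∈ [0,1); (iii) c is s-majoritarian for every rational s ∈ [0,1). -/
import Mathlib


/-- `r` rationalizes the quasi-choice `c`: `c A` is the set of `r`-maximal elements of `A`. -/
def Rationalizes {X : Type*} (r : X → X → Prop) (c : Set X → Set X) : Prop :=
  ∀ A : Set X, c A = {a ∈ A | ∀ b ∈ A, ¬ r b a}

/-- `c` is freely rationalizable (a ballot): rationalized by an arbitrary binary relation. -/
def FreelyRat {X : Type*} (c : Set X → Set X) : Prop :=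
  ∃ r : X → X → Prop, Rationalizes r c

/-- `c` is asymmetrically rationalizable. -/
def AsymRat {X : Type*} (c : Set X → Set X) : Prop :=
  ∃ r : X → X → Prop, (∀ a b, r a b → ¬ r b a) ∧ Rationalizes r c

/-- Contractiveness: `c` is a quasi-choice. -/
def IsQuasiChoice {X : Type*} (c : Set X → Set X) : Prop :=
  ∀ A : Set X, c A ⊆ A

/-- Axiom α (Chernoff, Standard Contraction Consistency). -/
def AxiomAlpha {X : Type*} (c : Set X → Set X) : Prop :=
  ∀ ⦃A B : Set X⦄ ⦃x : X⦄, A ⊆ B → x ∈ A → x ∈ c B → x ∈ c A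

/-- Axiom γ (Standard Expansion Consistency). -/
def AxiomGamma {X : Type*} (c : Set X → Set X) : Prop :=
  ∀ ⦃A B : Set X⦄ ⦃x : X⦄, x ∈ c A → x ∈ c B → x ∈ c (A ∪ B)

/-- A liberal representation of `c` by the family of ballots `v`. -/
def IsLiberalRep {X : Type*} (c : Set X → Set X) {k : ℕ} (v : Fin k → Set X → Set X) : Prop :=
  (∀ i, FreelyRat (v i)) ∧
    ∀ A : Set X, ∀ x ∈ A, (x ∈ c A ↔ ∃ i, x ∈ v i A)

/-- A democratic representation of `c` by the family of ballots `v`: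
an item is chosen iff more than half of the ballots endorse it. -/
def IsDemRep {X : Type*} (c : Set X → Set X) {k : ℕ} (v : Fin k → Set X → Set X) : Prop :=
  (∀ i, FreelyRat (v i)) ∧
    ∀ A : Set X, ∀ x ∈ A, (x ∈ c A ↔ 2 * Nat.card {i : Fin k // x ∈ v i A} > k)

/-- The liberal number of `c`: the minimum size of a liberal representation (⊤ if none). -/
noncomputable def lib {X : Type*} (c : Set X → Set X) : ℕ∞ :=
  sInf {n : ℕ∞ | ∃ (k : ℕ) (v : Fin k → Set X → Set X), 0 < k ∧ IsLiberalRep c v ∧ n = (k : ℕ∞)}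

/-- The democratic number of `c`: the minimum size of a democratic representation (⊤ if none). -/
noncomputable def dem {X : Type*} (c : Set X → Set X) : ℕ∞ :=
  sInf {n : ℕ∞ | ∃ (k : ℕ) (v : Fin k → Set X → Set X), 0 < k ∧ IsDemRep c v ∧ n = (k : ℕ∞)}

/-- `c` is `s`-majoritarian: some finite family of ballots selects exactly the items
endorsed by a share of ballots strictly larger than `s`. -/
def Majoritarian {X : Type*} (s : ℝ) (c : Set X → Set X) : Prop :=
  ∃ (k : ℕ) (v : Fin k → Set X → Set X), 0 < k ∧ (∀ i, FreelyRat (v i)) ∧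
    ∀ A : Set X, ∀ x ∈ A,
      (x ∈ c A ↔ (Nat.card {i : Fin k // x ∈ v i A} : ℝ) / (k : ℝ) > s)


section Helpers
variable {X : Type*}

/-- Every ballot satisfies Axiom α. -/
lemma ballot_alpha {v : Set X → Set X} (hv : FreelyRat v) :
    ∀ ⦃A B : Set X⦄ ⦃x : X⦄, A ⊆ B → x ∈ A → x ∈ v B → x ∈ v A := by
  obtain ⟨r, hr⟩ := hv
  intro A B x hAB hxA hxB
  rw [hr] at hxB ⊢
  exact ⟨hxA, fun b hb => hxB.2 b (hAB hb)⟩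

/-- Any majoritarian choice satisfies Axiom α. -/
lemma maj_alpha {s : ℝ} {c : Set X → Set X} (h : Majoritarian s c) : AxiomAlpha c := by
  obtain ⟨k, v, hk, hfree, hrep⟩ := h
  intro A B x hAB hxA hxB
  rw [hrep A x hxA]
  rw [hrep B x (hAB hxA)] at hxB
  refine lt_of_lt_of_le hxB ?_
  have : Nat.card {i : Fin k // x ∈ v i B} ≤ Nat.card {i : Fin k // x ∈ v i A} :=
    Nat.card_le_card_of_injective
      (fun j => ⟨j.1, ballot_alpha (hfree j.1) hAB hxA j.2⟩)
      (fun a b hab => Subtype.ext (by simpa using congrArg Subtype.val hab))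
  gcongr

end Helpers

open Classical in
/-- The elementary ballot family indexed by chosen pairs (plus a dummy). -/
noncomputable def Vb {X : Type*} (c : Set X → Set X) :
    Option {pr : X × Set X // pr.1 ∈ c pr.2} → Set X → Set X
  | none, _ => ∅
  | some pr, B => if pr.1.1 ∈ B ∧ B ⊆ pr.1.2 then {pr.1.1} else ∅

lemma Vb_free {X : Type*} (c : Set X → Set X) (o) : FreelyRat (Vb c o) := by
  classical
  match o with
  | none =>
    exact ⟨fun _ _ => True, fun B => by ext a; simp [Vb]; exact fun ha => ⟨a, ha⟩⟩
  | some ⟨⟨x₀, A₀⟩, h₀⟩ =>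
    refine ⟨fun b a => ¬ (a = x₀ ∧ b ∈ A₀), fun B => ?_⟩
    ext a
    simp only [Vb, Set.mem_setOf_eq, not_not]
    constructor
    · intro ha
      split_ifs at ha with h
      · obtain ⟨hx, hBA⟩ := h
        obtain rfl := Set.mem_singleton_iff.mp ha
        exact ⟨hx, fun b hb => ⟨rfl, hBA hb⟩⟩
      · exact absurd ha (Set.notMem_empty a)
    · rintro ⟨haB, hall⟩
      obtain ⟨rfl, -⟩ := hall a haB
      have hBA : B ⊆ A₀ := fun b hb => (hall b hb).2
      have hcond : (a, A₀).1 ∈ B ∧ B ⊆ (a, A₀).2 := ⟨haB, hBA⟩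
      rw [if_pos hcond]
      exact rfl

lemma Vb_sub {X : Type*} {c : Set X → Set X} (hα : AxiomAlpha c) (o) (B : Set X) :
    Vb c o B ⊆ c B := by
  match o with
  | none => simp [Vb]
  | some ⟨⟨x₀, A₀⟩, h₀⟩ =>
    intro a ha
    simp only [Vb] at ha
    split_ifs at ha with h
    · obtain rfl := Set.mem_singleton_iff.mp ha
      exact hα h.2 h.1 h₀
    · exact absurd ha (Set.notMem_empty a)

lemma id_free {X : Type*} : FreelyRat (id : Set X → Set X) := by
  refine ⟨fun _ _ => False, fun B => ?_⟩
  ext a; simp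

lemma alpha_maj {X : Type*} [Fintype X] {c : Set X → Set X}
    (hα : AxiomAlpha c) (s : ℚ) (hs0 : 0 ≤ s) (hs1 : s < 1) :
    Majoritarian (s : ℝ) c := by
  classical
  obtain ⟨k, ⟨e⟩⟩ := Finite.exists_equiv_fin (Option {pr : X × Set X // pr.1 ∈ c pr.2})
  have hk : 0 < k := (e none).pos
  set v : Fin k → Set X → Set X := fun i => Vb c (e.symm i) with hv
  set p := s.num.toNat with hp
  set q := s.den with hqdef
  have hq0 : 0 < q := s.den_pos
  have hnum : (0:ℤ) ≤ s.num := Rat.num_nonneg.mpr hs0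
  have hlt : s.num < (s.den : ℤ) := by
    have h1 : (s.num : ℚ) < (s.den : ℚ) := by
      rw [← Rat.num_div_den s] at hs1
      exact (div_lt_one (by exact_mod_cast s.den_pos)).mp hs1
    exact_mod_cast h1
  have hpq : p < q := by omega
  have scast : (s : ℝ) = (p : ℝ) / (q : ℝ) := by
    rw [Rat.cast_def]
    congr 1
    exact_mod_cast (Int.toNat_of_nonneg hnum).symm
  have key : p * k + (q - p) * k = q * k := by
    have : p * k ≤ q * k := Nat.mul_le_mul_right k hpq.le
    rw [Nat.sub_mul]; omega
  let J := (Fin p × Fin k) ⊕ (Fin (q - p) × Fin k)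
  let E : J ≃ Fin (q * k) :=
    ((finProdFinEquiv.sumCongr finProdFinEquiv).trans finSumFinEquiv).trans (finCongr key)
  let W : J → Set X → Set X := Sum.elim (fun _ => id) (fun mi => v mi.2)
  let w : Fin (q * k) → Set X → Set X := fun j => W (E.symm j)
  have hWfree : ∀ u : J, FreelyRat (W u) := by
    rintro (a | b)
    · exact id_free
    · exact Vb_free c _
  refine ⟨q * k, w, Nat.mul_pos hq0 hk, fun j => hWfree (E.symm j), ?_⟩
  intro A x hxA
  set t := Nat.card {i : Fin k // x ∈ v i A} with htdef
  have hN : Nat.card {j : Fin (q * k) // x ∈ w j A} = p * k + (q - p) * t := by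
    have e1 : {j : Fin (q * k) // x ∈ w j A} ≃ {u : J // x ∈ W u A} :=
      Equiv.subtypeEquiv E.symm (fun j => Iff.rfl)
    have c1 : Nat.card {a : Fin p × Fin k // x ∈ W (Sum.inl a) A} = p * k := by
      rw [Nat.card_congr ((Equiv.subtypeUnivEquiv (fun _ => hxA)) : {a : Fin p × Fin k // x ∈ W (Sum.inl a) A} ≃ (Fin p × Fin k))]
      simp [Nat.card_eq_fintype_card]
    have e3 : {b : Fin (q - p) × Fin k // x ∈ W (Sum.inr b) A} ≃
        Fin (q - p) × {i : Fin k // x ∈ v i A} :=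
      ⟨fun b => (b.1.1, ⟨b.1.2, b.2⟩), fun u => ⟨(u.1, u.2.1), u.2.2⟩,
        fun _ => rfl, fun _ => rfl⟩
    have c2 : Nat.card {b : Fin (q - p) × Fin k // x ∈ W (Sum.inr b) A} = (q - p) * t := by
      rw [Nat.card_congr e3, Nat.card_prod]
      simp [Nat.card_eq_fintype_card, htdef]
    rw [Nat.card_congr (e1.trans Equiv.subtypeSum), Nat.card_sum, c1, c2]
  rw [hN, scast]
  constructor
  · intro hx
    have hw : x ∈ v (e (some ⟨(x, A), hx⟩)) A := by
      simp [hv, Vb, hxA, subset_rfl]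
    have ht : 0 < t := by
      rw [htdef]
      have : Nonempty {i : Fin k // x ∈ v i A} := ⟨⟨_, hw⟩⟩
      exact Nat.card_pos
    have hnat : p * (q * k) < (p * k + (q - p) * t) * q := by
      have h1 : 0 < (q - p) * t * q := Nat.mul_pos (Nat.mul_pos (by omega) ht) hq0
      calc p * (q * k) = p * k * q := by ring
        _ < p * k * q + (q - p) * t * q := by omega
        _ = (p * k + (q - p) * t) * q := by ring
    rw [gt_iff_lt, div_lt_div_iff₀ (by positivity) (by positivity)]
    exact_mod_cast hnat
  · intro hgt
    by_contra hx
    have hte : IsEmpty {i : Fin k // x ∈ v i A} :=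
      ⟨fun j => hx (Vb_sub hα _ A j.2)⟩
    have ht0 : t = 0 := by rw [htdef]; exact Nat.card_of_isEmpty
    rw [ht0, gt_iff_lt] at hgt
    have heq : ((p * k + (q - p) * 0 : ℕ) : ℝ) / ((q * k : ℕ) : ℝ) = (p : ℝ) / q := by
      push_cast
      rw [mul_zero, add_zero, mul_div_mul_right _ _ (by positivity : (k:ℝ) ≠ 0)]
    rw [heq] at hgt
    exact lt_irrefl _ hgt

theorem stmt8 {X : Type*} [Fintype X] (c : Set X → Set X) (hq : IsQuasiChoice c) :
    (AxiomAlpha c ↔ ∃ s : ℚ, 0 ≤ s ∧ s < 1 ∧ Majoritarian (s : ℝ) c) ∧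
    (AxiomAlpha c ↔ ∀ s : ℚ, 0 ≤ s → s < 1 → Majoritarian (s : ℝ) c) := by
  constructor
  · constructor
    · intro hα
      exact ⟨0, le_rfl, by norm_num, alpha_maj hα 0 le_rfl (by norm_num)⟩
    · rintro ⟨s, hs0, hs1, hm⟩
      exact maj_alpha hm
  · constructor
    · exact fun hα s hs0 hs1 => alpha_maj hα s hs0 hs1
    · exact fun h => maj_alpha (h 0 le_rfl (by norm_num))
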